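/- arXiv:1904.05174 — 2 statements merged into one kernel-verified Lean document; each statement's English description precedes it below -/
import Mathlib

section
/- Let p be an odd prime, and let V = (C_p × C_p) ⋊ C_2 be the generalized dihedral group of order 2p^2. The holomorph Hol(V) contains a subgroup F₂ that is isomorphic to ZMod p × DihedralGroup p, acts regularly on V, and whose normalizer in Equiv.Perm V is contained in Hol(V). -/
/-- The holomorph of a group `X`: the normalizer in `Equiv.Perm X` of the image of the
left regular representation of `X`. -/
def Hol (X : Type*) [Group X] : Subgroup (Equiv.Perm X) :=
  Subgroup.normalizer ((MulAction.toPermHom X X).range : Set (Equiv.Perm X))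

/-- A subgroup `S` of `Equiv.Perm X` acts regularly on `X`: the action is transitive and
the stabilizer of every point is trivial. -/
def IsRegularSubgroup {X : Type*} (S : Subgroup (Equiv.Perm X)) : Prop :=
  (∀ x y : X, ∃ s ∈ S, s x = y) ∧ ∀ s ∈ S, ∀ x : X, s x = x → s = 1

/-- The inversion automorphism of `C_p × C_p` (written multiplicatively). -/
def invAut (p : ℕ) : MulAut (Multiplicative (ZMod p × ZMod p)) :=
  MulEquiv.inv (Multiplicative (ZMod p × ZMod p))

/-- The action of `C_2` on `C_p × C_p` by inversion. -/
def invHom (p : ℕ) : Multiplicative (ZMod 2) →* MulAut (Multiplicative (ZMod p × ZMod p)) where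
  toFun g := invAut p ^ (Multiplicative.toAdd g).val
  map_one' := by simp
  map_mul' g h := by
    have h2 : invAut p ^ 2 = 1 := by
      ext x
      all_goals simp [invAut, sq]
    show invAut p ^ (Multiplicative.toAdd (g * h)).val = _
    rw [toAdd_mul, ZMod.val_add, ← pow_add]
    exact (pow_eq_pow_mod _ h2).symm

/-- The generalized dihedral group `(C_p × C_p) ⋊ C_2`: the semidirect product of
`C_p × C_p` (written multiplicatively) by the group of order 2 acting by inversion. -/
abbrev GenDihedral (p : ℕ) : Type :=
  SemidirectProduct (Multiplicative (ZMod p × ZMod p)) (Multiplicative (ZMod 2)) (invHom p)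

theorem Equiv.Perm.apply_inv_self {α : Type*} (f : Equiv.Perm α) (x : α) : f (f⁻¹ x) = x :=
  f.apply_symm_apply x

theorem Equiv.Perm.inv_apply_self {α : Type*} (f : Equiv.Perm α) (x : α) : f⁻¹ (f x) = x :=
  f.symm_apply_apply x

namespace HolAux

open Multiplicative DihedralGroup

abbrev W (p : ℕ) := Multiplicative (ZMod p) × DihedralGroup p

/-- A general criterion for membership in the holomorph. -/
lemma lam_apply {X : Type*} [Group X] (g x : X) :
    (MulAction.toPermHom X X g) x = g * x := rfl

lemma memHol {X : Type*} [Group X] (σ : Equiv.Perm X)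
    (h : ∀ x y, σ (x * y) = σ x * (σ 1)⁻¹ * σ y) : σ ∈ Hol X := by
  set ψ : Equiv.Perm X := σ.trans (Equiv.mulLeft (σ 1)⁻¹) with hψdef
  have hψ : ∀ x y, ψ (x * y) = ψ x * ψ y := by
    intro x y
    show (σ 1)⁻¹ * σ (x * y) = ((σ 1)⁻¹ * σ x) * ((σ 1)⁻¹ * σ y)
    rw [h x y]; group
  have hψa : ∀ x, ψ x = (σ 1)⁻¹ * σ x := fun x => rfl
  have hψi : ∀ x y, ψ⁻¹ (x * y) = ψ⁻¹ x * ψ⁻¹ y := by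
    intro x y
    apply ψ.injective
    rw [hψ, Equiv.Perm.apply_inv_self, Equiv.Perm.apply_inv_self, Equiv.Perm.apply_inv_self]
  have hψHol : ψ ∈ Hol X := by
    rw [Hol, Subgroup.mem_normalizer_iff]
    intro b
    constructor
    · rintro ⟨g, rfl⟩
      refine ⟨ψ g, ?_⟩
      ext x
      show ψ g * x = ψ ((MulAction.toPermHom X X g) (ψ⁻¹ x))
      rw [lam_apply, hψ, Equiv.Perm.apply_inv_self]
    · rintro ⟨g, hg⟩
      refine ⟨ψ⁻¹ g, ?_⟩
      have hb : ∀ x, b x = ψ⁻¹ ((MulAction.toPermHom X X g) (ψ x)) := by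
        intro x
        have := congrArg (fun τ : Equiv.Perm X => ψ⁻¹ (τ (ψ x))) hg
        simpa [Equiv.Perm.inv_apply_self] using this.symm
      ext x
      rw [hb x, lam_apply, lam_apply, hψi, Equiv.Perm.inv_apply_self]
  have hσ : σ = (MulAction.toPermHom X X (σ 1)) * ψ := by
    ext x
    show σ x = (σ 1) * ((σ 1)⁻¹ * σ x)
    group
  rw [hσ]
  exact mul_mem (Subgroup.le_normalizer (H := (MulAction.toPermHom X X).range) ⟨σ 1, rfl⟩) hψHol

lemma invHom_zero (p : ℕ) (n : Multiplicative (ZMod p × ZMod p)) :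
    invHom p (ofAdd 0) n = n := by
  show (invAut p ^ (Multiplicative.toAdd (ofAdd (0 : ZMod 2))).val) n = n
  simp

lemma invHom_one (p : ℕ) (n : Multiplicative (ZMod p × ZMod p)) :
    invHom p (ofAdd 1) n = n⁻¹ := by
  show (invAut p ^ (Multiplicative.toAdd (ofAdd (1 : ZMod 2))).val) n = n⁻¹
  have : ((1 : ZMod 2)).val = 1 := rfl
  simp [this, invAut]

lemma V_mul0 (p : ℕ) (a b : ZMod p × ZMod p) (δ : ZMod 2) :
    (⟨ofAdd a, ofAdd 0⟩ * ⟨ofAdd b, ofAdd δ⟩ : GenDihedral p) = ⟨ofAdd (a + b), ofAdd δ⟩ := by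
  apply SemidirectProduct.ext
  · show ofAdd a * invHom p (ofAdd 0) (ofAdd b) = ofAdd (a + b)
    rw [invHom_zero, ← ofAdd_add]
  · show ofAdd (0 : ZMod 2) * ofAdd δ = ofAdd δ
    rw [← ofAdd_add, zero_add]

lemma V_mul1 (p : ℕ) (a b : ZMod p × ZMod p) (δ : ZMod 2) :
    (⟨ofAdd a, ofAdd 1⟩ * ⟨ofAdd b, ofAdd δ⟩ : GenDihedral p) = ⟨ofAdd (a - b), ofAdd (1 + δ)⟩ := by
  apply SemidirectProduct.ext
  · show ofAdd a * invHom p (ofAdd 1) (ofAdd b) = ofAdd (a - b)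
    rw [invHom_one]
    show ofAdd a * ofAdd (-b) = _
    rw [← ofAdd_add, sub_eq_add_neg]
  · show ofAdd (1 : ZMod 2) * ofAdd δ = ofAdd (1 + δ)
    rw [← ofAdd_add]

lemma V_inv0 (p : ℕ) (a : ZMod p × ZMod p) :
    (⟨ofAdd a, ofAdd 0⟩ : GenDihedral p)⁻¹ = ⟨ofAdd (-a), ofAdd 0⟩ := by
  rw [eq_comm, eq_inv_iff_mul_eq_one, V_mul0, neg_add_cancel]
  rfl

lemma V_inv1 (p : ℕ) (a : ZMod p × ZMod p) :
    (⟨ofAdd a, ofAdd 1⟩ : GenDihedral p)⁻¹ = ⟨ofAdd a, ofAdd 1⟩ := by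
  rw [eq_comm, eq_inv_iff_mul_eq_one, V_mul1, sub_self]
  show (⟨ofAdd 0, ofAdd (1 + 1 : ZMod 2)⟩ : GenDihedral p) = 1
  norm_num
  rfl

end HolAux

namespace HolAux

open Multiplicative DihedralGroup

def eFun (p : ℕ) : W p → GenDihedral p
  | (m, .r k) => ⟨ofAdd (m.toAdd, k), ofAdd 0⟩
  | (m, .sr k) => ⟨ofAdd (m.toAdd, k), ofAdd 1⟩

def eInv (p : ℕ) (x : GenDihedral p) : W p :=
  if x.right = ofAdd 0 then (ofAdd x.left.toAdd.1, .r x.left.toAdd.2)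
  else (ofAdd x.left.toAdd.1, .sr x.left.toAdd.2)

lemma zmod2_cases (h : Multiplicative (ZMod 2)) : h = ofAdd 0 ∨ h = ofAdd 1 := by
  revert h; decide

def eEquiv (p : ℕ) : W p ≃ GenDihedral p where
  toFun := eFun p
  invFun := eInv p
  left_inv := by
    rintro ⟨m, k | k⟩ <;> simp [eFun, eInv]
  right_inv := by
    rintro ⟨n, h⟩
    rcases zmod2_cases h with rfl | rfl <;> simp [eFun, eInv]

lemma eEquiv_r (p : ℕ) (m : Multiplicative (ZMod p)) (k : ZMod p) :
    eEquiv p (m, .r k) = ⟨ofAdd (m.toAdd, k), ofAdd 0⟩ := rfl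

lemma eEquiv_sr (p : ℕ) (m : Multiplicative (ZMod p)) (k : ZMod p) :
    eEquiv p (m, .sr k) = ⟨ofAdd (m.toAdd, k), ofAdd 1⟩ := rfl

lemma dg_inv_r (p : ℕ) (k : ZMod p) : (DihedralGroup.r k)⁻¹ = DihedralGroup.r (-k) :=
  inv_eq_of_mul_eq_one_right (by rw [r_mul_r, add_neg_cancel]; rfl)

lemma dg_inv_sr (p : ℕ) (k : ZMod p) : (DihedralGroup.sr k)⁻¹ = DihedralGroup.sr k :=
  inv_eq_of_mul_eq_one_right (sr_mul_self k)

end HolAux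

namespace HolAux

open Multiplicative DihedralGroup

lemma master_rr (p : ℕ) (m c : Multiplicative (ZMod p)) (k d : ZMod p) :
    eEquiv p (m, .r k) * eEquiv p (c, .r d) = eEquiv p ((m, .r k) * (c, .r d)) := by
  rw [eEquiv_r, eEquiv_r, V_mul0, Prod.mk_mul_mk, r_mul_r, eEquiv_r]
  simp

lemma master_rs (p : ℕ) (m c : Multiplicative (ZMod p)) (k d : ZMod p) :
    eEquiv p (m, .r k) * eEquiv p (c, .sr d) = eEquiv p ((c, .sr d) * (m, .r k)) := by
  rw [eEquiv_r, eEquiv_sr, V_mul0, Prod.mk_mul_mk, sr_mul_r, eEquiv_sr]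
  simp [add_comm]

lemma master_sr (p : ℕ) (m c : Multiplicative (ZMod p)) (k d : ZMod p) :
    eEquiv p (m, .sr k) * eEquiv p (c, .r d) = eEquiv p ((m, .sr k) * (c, .r d)⁻¹) := by
  rw [eEquiv_sr, eEquiv_r, V_mul1, Prod.inv_mk, dg_inv_r, Prod.mk_mul_mk, sr_mul_r, eEquiv_sr]
  simp [sub_eq_add_neg, Prod.ext_iff]

lemma master_ss (p : ℕ) (m c : Multiplicative (ZMod p)) (k d : ZMod p) :
    eEquiv p (m, .sr k) * eEquiv p (c, .sr d) = eEquiv p ((c, .sr d)⁻¹ * (m, .sr k)) := by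
  rw [eEquiv_sr, eEquiv_sr, V_mul1, Prod.inv_mk, dg_inv_sr, Prod.mk_mul_mk, sr_mul_sr, eEquiv_r]
  have : (1 + 1 : ZMod 2) = 0 := rfl
  simp [this, sub_eq_add_neg, Prod.ext_iff, add_comm]

end HolAux

namespace HolAux

open Multiplicative DihedralGroup

def L (p : ℕ) : W p →* Equiv.Perm (GenDihedral p) where
  toFun w := ((eEquiv p).symm.trans (Equiv.mulLeft w)).trans (eEquiv p)
  map_one' := Equiv.ext fun x => by simp
  map_mul' w₁ w₂ := Equiv.ext fun x => by simp [mul_assoc]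

lemma L_apply (p : ℕ) (w : W p) (x : GenDihedral p) :
    L p w x = eEquiv p (w * (eEquiv p).symm x) := rfl

lemma L_apply_e (p : ℕ) (w w₁ : W p) :
    L p w (eEquiv p w₁) = eEquiv p (w * w₁) := by
  rw [L_apply, Equiv.symm_apply_apply]

lemma eEquiv_one (p : ℕ) : eEquiv p 1 = 1 := rfl

lemma L_one_apply (p : ℕ) (w : W p) : L p w 1 = eEquiv p w := by
  have := L_apply_e p w 1
  rwa [eEquiv_one, mul_one] at this

set_option maxHeartbeats 1000000 in
lemma L_mem_Hol (p : ℕ) (w : W p) : L p w ∈ Hol (GenDihedral p) := by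
  apply memHol
  intro x y
  obtain ⟨w₁, rfl⟩ := (eEquiv p).surjective x
  obtain ⟨w₂, rfl⟩ := (eEquiv p).surjective y
  rw [L_one_apply, L_apply_e, L_apply_e]
  rcases w with ⟨m, k | k⟩ <;> rcases w₁ with ⟨c, d | d⟩ <;> rcases w₂ with ⟨c', d' | d'⟩ <;>
    (first | rw [master_rr] | rw [master_rs] | rw [master_sr] | rw [master_ss]) <;>
    rw [L_apply_e] <;>
    simp only [Prod.mk_mul_mk, Prod.inv_mk, dg_inv_r, dg_inv_sr, r_mul_r, r_mul_sr,
      sr_mul_r, sr_mul_sr, eEquiv_r, eEquiv_sr, toAdd_mul, toAdd_inv, toAdd_ofAdd,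
      Prod.neg_mk, Prod.mk_sub_mk, Prod.mk_add_mk, V_inv0, V_inv1, V_mul0, V_mul1,
      show ((1 : ZMod 2) + 1) = 0 from rfl, add_zero, zero_add] <;>
    refine congrArg₂ SemidirectProduct.mk (congrArg ofAdd ?_) (by decide) <;>
    rw [Prod.mk.injEq] <;> constructor <;> ring

end HolAux

namespace HolAux

open Multiplicative DihedralGroup

def IsR {p : ℕ} : W p → Prop
  | (_, .r _) => True
  | (_, .sr _) => False

lemma sq_isR {p : ℕ} (z : W p) : IsR (z * z) := by
  rcases z with ⟨m, b | b⟩ <;>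
    simp [Prod.mk_mul_mk, r_mul_r, sr_mul_sr, IsR] <;> exact trivial

lemma two_ne_zero' {p : ℕ} (hp : p.Prime) (hodd : Odd p) : (2 : ZMod p) ≠ 0 := by
  have h2 : ((2 : ℕ) : ZMod p) ≠ 0 := by
    rw [Ne, ZMod.natCast_eq_zero_iff]
    intro hdvd
    have := (Nat.prime_dvd_prime_iff_eq hp Nat.prime_two).mp hdvd
    rw [this] at hodd
    exact (Nat.not_odd_iff_even.mpr (even_two : Even 2)) hodd
  simpa using h2

lemma isR_sqrt {p : ℕ} (hp : p.Prime) (hodd : Odd p) (m : Multiplicative (ZMod p)) (k : ZMod p) :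
    ∃ z : W p, z * z = (m, .r k) := by
  haveI : Fact p.Prime := ⟨hp⟩
  have h2 := two_ne_zero' hp hodd
  refine ⟨(ofAdd ((2 : ZMod p)⁻¹ * m.toAdd), .r ((2 : ZMod p)⁻¹ * k)), ?_⟩
  rw [Prod.mk_mul_mk, r_mul_r]
  have key : ∀ t : ZMod p, (2 : ZMod p)⁻¹ * t + (2 : ZMod p)⁻¹ * t = t := by
    intro t
    have : (2 : ZMod p)⁻¹ * t + (2 : ZMod p)⁻¹ * t = ((2 : ZMod p)⁻¹ * 2) * t := by ring
    rw [this, inv_mul_cancel₀ h2, one_mul]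
  refine Prod.ext ?_ ?_
  · show ofAdd _ * ofAdd _ = m
    rw [← ofAdd_add, key, ofAdd_toAdd]
  · show DihedralGroup.r _ = DihedralGroup.r k
    rw [key]

lemma isR_map {p : ℕ} (hp : p.Prime) (hodd : Odd p) (f : W p ≃* W p) (w : W p) (h : IsR w) :
    IsR (f w) := by
  rcases w with ⟨m, b | b⟩
  · obtain ⟨z, hz⟩ := isR_sqrt hp hodd m b
    rw [← hz, map_mul]
    exact sq_isR _
  · exact h.elim

lemma map_r {p : ℕ} (hp : p.Prime) (hodd : Odd p) (f : W p ≃* W p)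
    (c : Multiplicative (ZMod p)) (d : ZMod p) :
    ∃ a b, f (c, .r d) = (a, DihedralGroup.r b) := by
  have h := isR_map hp hodd f (c, .r d) trivial
  rcases hfw : f (c, .r d) with ⟨a, b | b⟩
  · exact ⟨a, b, rfl⟩
  · rw [hfw] at h; exact h.elim

lemma map_sr {p : ℕ} (hp : p.Prime) (hodd : Odd p) (f : W p ≃* W p)
    (c : Multiplicative (ZMod p)) (d : ZMod p) :
    ∃ a b, f (c, .sr d) = (a, DihedralGroup.sr b) := by
  rcases hfw : f (c, .sr d) with ⟨a, b | b⟩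
  · have h := isR_map hp hodd f.symm (a, .r b) trivial
    rw [← hfw, MulEquiv.symm_apply_apply] at h
    exact h.elim
  · exact ⟨a, b, rfl⟩

end HolAux

namespace HolAux

open Multiplicative DihedralGroup

def psiPerm (p : ℕ) (f : W p ≃* W p) : Equiv.Perm (GenDihedral p) :=
  (eEquiv p).symm.trans (f.toEquiv.trans (eEquiv p))

lemma psi_apply_e (p : ℕ) (f : W p ≃* W p) (w : W p) :
    psiPerm p f (eEquiv p w) = eEquiv p (f w) := by
  simp [psiPerm]

lemma psiPerm_mem_Hol (p : ℕ) (hp : p.Prime) (hodd : Odd p) (f : W p ≃* W p) :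
    psiPerm p f ∈ Hol (GenDihedral p) := by
  have hσ1 : psiPerm p f 1 = 1 := by
    have := psi_apply_e p f 1
    rwa [eEquiv_one, f.map_one, eEquiv_one] at this
  apply memHol
  intro x y
  rw [hσ1, inv_one, mul_one]
  obtain ⟨w₁, rfl⟩ := (eEquiv p).surjective x
  obtain ⟨w₂, rfl⟩ := (eEquiv p).surjective y
  rcases w₁ with ⟨c, d | d⟩ <;> rcases w₂ with ⟨c', d' | d'⟩
  · obtain ⟨a₁, b₁, h₁⟩ := map_r hp hodd f c d
    obtain ⟨a₂, b₂, h₂⟩ := map_r hp hodd f c' d'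
    rw [master_rr, psi_apply_e, psi_apply_e, psi_apply_e, map_mul, h₁, h₂, master_rr]
  · obtain ⟨a₁, b₁, h₁⟩ := map_r hp hodd f c d
    obtain ⟨a₂, b₂, h₂⟩ := map_sr hp hodd f c' d'
    rw [master_rs, psi_apply_e, psi_apply_e, psi_apply_e, map_mul, h₁, h₂, master_rs]
  · obtain ⟨a₁, b₁, h₁⟩ := map_sr hp hodd f c d
    obtain ⟨a₂, b₂, h₂⟩ := map_r hp hodd f c' d'
    rw [master_sr, psi_apply_e, psi_apply_e, psi_apply_e, map_mul, map_inv, h₁, h₂, master_sr]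
  · obtain ⟨a₁, b₁, h₁⟩ := map_sr hp hodd f c d
    obtain ⟨a₂, b₂, h₂⟩ := map_sr hp hodd f c' d'
    rw [master_ss, psi_apply_e, psi_apply_e, psi_apply_e, map_mul, map_inv, h₁, h₂, master_ss]

end HolAux

namespace HolAux

open Multiplicative DihedralGroup

lemma L_injective (p : ℕ) : Function.Injective (L p) := by
  intro w w' h
  have h1 : L p w 1 = L p w' 1 := by rw [h]
  rw [L_one_apply, L_one_apply] at h1
  exact (eEquiv p).injective h1

lemma normalizer_le_Hol (p : ℕ) (hp : p.Prime) (hodd : Odd p) :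
    Subgroup.normalizer ((L p).range : Set (Equiv.Perm (GenDihedral p))) ≤ Hol (GenDihedral p) := by
  intro η hη
  set u := (eEquiv p).symm (η 1) with hu
  set ψ : Equiv.Perm (GenDihedral p) := (L p u)⁻¹ * η with hψdef
  have hψmem : ψ ∈ Subgroup.normalizer ((L p).range : Set (Equiv.Perm (GenDihedral p))) :=
    mul_mem (inv_mem (Subgroup.le_normalizer (H := (L p).range) ⟨u, rfl⟩)) hη
  have hψ1 : ψ 1 = 1 := by
    show ((L p u)⁻¹) (η 1) = 1
    rw [← map_inv (L p) u, L_apply]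
    show eEquiv p (u⁻¹ * u) = 1
    rw [inv_mul_cancel, eEquiv_one]
  have hψi1 : ψ⁻¹ (1 : GenDihedral p) = 1 := by
    conv_lhs => rw [← hψ1]
    exact Equiv.Perm.inv_apply_self ψ 1
  have key : ∀ w, ψ * L p w * ψ⁻¹ = L p ((eEquiv p).symm (ψ (eEquiv p w))) := by
    intro w
    obtain ⟨w', hw'⟩ := ((Subgroup.mem_normalizer_iff.mp hψmem) (L p w)).mp ⟨w, rfl⟩
    have h1 : (ψ * L p w * ψ⁻¹) 1 = ψ (eEquiv p w) := by
      show ψ (L p w (ψ⁻¹ 1)) = _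
      rw [hψi1, L_one_apply]
    rw [← hw', L_one_apply] at h1
    rw [← hw']
    congr 1
    rw [← h1, Equiv.symm_apply_apply]
  have hf : ∀ w₁ w₂, (eEquiv p).symm (ψ (eEquiv p (w₁ * w₂))) =
      (eEquiv p).symm (ψ (eEquiv p w₁)) * (eEquiv p).symm (ψ (eEquiv p w₂)) := by
    intro w₁ w₂
    apply L_injective p
    calc L p ((eEquiv p).symm (ψ (eEquiv p (w₁ * w₂))))
        = ψ * L p (w₁ * w₂) * ψ⁻¹ := (key _).symm
      _ = (ψ * L p w₁ * ψ⁻¹) * (ψ * L p w₂ * ψ⁻¹) := by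
          rw [map_mul (L p) w₁ w₂]; group
      _ = L p ((eEquiv p).symm (ψ (eEquiv p w₁))) * L p ((eEquiv p).symm (ψ (eEquiv p w₂))) := by
          rw [key, key]
      _ = L p ((eEquiv p).symm (ψ (eEquiv p w₁)) * (eEquiv p).symm (ψ (eEquiv p w₂))) :=
          (map_mul (L p) _ _).symm
  set f : W p ≃* W p :=
    MulEquiv.mk' ((eEquiv p).trans (ψ.trans (eEquiv p).symm)) (fun w₁ w₂ => hf w₁ w₂) with hfdef
  have hψHol : psiPerm p f ∈ Hol (GenDihedral p) := psiPerm_mem_Hol p hp hodd f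
  have hpsiψ : psiPerm p f = ψ := by
    refine Equiv.ext fun x => ?_
    show eEquiv p ((eEquiv p).symm (ψ (eEquiv p ((eEquiv p).symm x)))) = ψ x
    rw [Equiv.apply_symm_apply, Equiv.apply_symm_apply]
  rw [hpsiψ] at hψHol
  have hη' : η = L p u * ψ := by rw [hψdef]; group
  rw [hη']
  exact mul_mem (L_mem_Hol p u) hψHol

end HolAux


open HolAux Multiplicative DihedralGroup

/-- The holomorph of the generalized dihedral group `V = (C_p × C_p) ⋊ C_2` of order
`2 p ^ 2` (`p` an odd prime) contains a subgroup isomorphic to `C_p × D_{2p}` acting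
regularly on `V`, whose normalizer in `Equiv.Perm V` is contained in the holomorph. -/
theorem dihedral_prod_type_regular_in_hol_genDihedral (p : ℕ) (hp : p.Prime) (hodd : Odd p) :
    ∃ F : Subgroup (Equiv.Perm (GenDihedral p)),
      F ≤ Hol (GenDihedral p) ∧
      Nonempty (↥F ≃* Multiplicative (ZMod p) × DihedralGroup p) ∧
      IsRegularSubgroup F ∧
      Subgroup.normalizer (F : Set (Equiv.Perm (GenDihedral p))) ≤ Hol (GenDihedral p) := by
  refine ⟨(L p).range, ?_, ?_, ?_, ?_⟩
  · rintro σ ⟨w, rfl⟩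
    exact L_mem_Hol p w
  · exact ⟨(MonoidHom.ofInjective (L_injective p)).symm⟩
  · constructor
    · intro x y
      refine ⟨L p ((eEquiv p).symm y * ((eEquiv p).symm x)⁻¹), ⟨_, rfl⟩, ?_⟩
      rw [HolAux.L_apply, mul_assoc, inv_mul_cancel, mul_one, Equiv.apply_symm_apply]
    · rintro s ⟨w, rfl⟩ x hx
      rw [HolAux.L_apply] at hx
      have h2 : w * (eEquiv p).symm x = (eEquiv p).symm x :=
        (eEquiv p).injective (by rw [hx, Equiv.apply_symm_apply])
      have h3 : w * (eEquiv p).symm x = 1 * (eEquiv p).symm x := by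
        rw [one_mul]; exact h2
      rw [mul_right_cancel h3, map_one]
  · exact normalizer_le_Hol p hp hodd
end

section
/- (Theorem 4.1, second case) Let p be an odd prime, G a finite group, G' ≤ G a subgroup of index 2p^2, and λ : G → Equiv.Perm (G ⧸ G') the action by left translation on left cosets. If there exists a regular subgroup of Equiv.Perm (G ⧸ G') isomorphic to ZMod p × DihedralGroup p that is normalized by λ(G), then there exists a regular subgroup of Equiv.Perm (G ⧸ G') isomorphic to the generalized dihedral group (C_p × C_p) ⋊ C_2 that is normalized by λ(G). -/
open Equiv

namespace GenDihAux

variable (p : ℕ)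

abbrev K := Multiplicative (ZMod p) × DihedralGroup p

def lam : K p →* Equiv.Perm (K p) := MulAction.toPermHom (K p) (K p)

lemma lam_apply (k x : K p) : lam p k x = k * x := rfl

lemma lam_injective : Function.Injective (lam p) := fun a b hab => by
  have := congrArg (fun f : Equiv.Perm (K p) => f 1) hab
  simpa [lam_apply] using this

def tfun : K p → K p := fun x => (x.1⁻¹, DihedralGroup.sr 0 * x.2)

lemma tfun_invol : Function.Involutive (tfun p) := by
  rintro ⟨z, (k | k)⟩ <;> simp [tfun]

def tperm : Equiv.Perm (K p) := (tfun_invol p).toPerm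

lemma tperm_apply (x : K p) : tperm p x = tfun p x := rfl

lemma tperm_sq : tperm p * tperm p = 1 :=
  Equiv.ext fun x => tfun_invol p x

lemma tperm_inv : (tperm p)⁻¹ = tperm p :=
  inv_eq_of_mul_eq_one_left (tperm_sq p)

def emb : Multiplicative (ZMod p × ZMod p) →* K p where
  toFun a := (Multiplicative.ofAdd (Multiplicative.toAdd a).1,
    DihedralGroup.r (Multiplicative.toAdd a).2)
  map_one' := rfl
  map_mul' a b := by
    show Prod.mk _ _ = _
    rw [Prod.mk_mul_mk, DihedralGroup.r_mul_r]
    rfl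

lemma emb_apply (a : Multiplicative (ZMod p × ZMod p)) :
    emb p a = (Multiplicative.ofAdd (Multiplicative.toAdd a).1,
      DihedralGroup.r (Multiplicative.toAdd a).2) := rfl

def fA : Multiplicative (ZMod p × ZMod p) →* Equiv.Perm (K p) := (lam p).comp (emb p)

lemma fA_apply (a : Multiplicative (ZMod p × ZMod p)) (x : K p) :
    fA p a x = emb p a * x := rfl

@[simp] lemma r_inv (i : ZMod p) : (DihedralGroup.r i : DihedralGroup p)⁻¹ = DihedralGroup.r (-i) := rfl

@[simp] lemma sr_inv (i : ZMod p) : (DihedralGroup.sr i : DihedralGroup p)⁻¹ = DihedralGroup.sr i := rfl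

lemma t_mul (a : Multiplicative (ZMod p × ZMod p)) (x : K p) :
    tperm p (emb p a * x) = (emb p a)⁻¹ * tperm p x := by
  obtain ⟨z, (k | k)⟩ := x <;>
    simp [tperm_apply, tfun, emb_apply, Prod.mk_mul_mk, mul_inv, mul_comm, sub_eq_add_neg,
      add_comm, Multiplicative.ofAdd]

def fC : Multiplicative (ZMod 2) →* Equiv.Perm (K p) where
  toFun c := tperm p ^ (Multiplicative.toAdd c).val
  map_one' := by simp
  map_mul' g h := by
    have h2 : tperm p ^ 2 = 1 := by rw [sq]; exact tperm_sq p
    show tperm p ^ (Multiplicative.toAdd (g * h)).val = _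
    rw [toAdd_mul, ZMod.val_add, ← pow_add]
    exact (pow_eq_pow_mod _ h2).symm

lemma fC_cases (c : Multiplicative (ZMod 2)) : fC p c = 1 ∨ fC p c = tperm p := by
  have : (Multiplicative.toAdd c).val = 0 ∨ (Multiplicative.toAdd c).val = 1 := by
    have := (Multiplicative.toAdd c).val_lt
    omega
  rcases this with h | h <;> [left; right] <;>
    simp only [fC, MonoidHom.coe_mk, OneHom.coe_mk, h, pow_zero, pow_one]

end GenDihAux

namespace GenDihAux2
open GenDihAux Multiplicative DihedralGroup

variable (p : ℕ)

lemma compat : ∀ g, (fA p).comp ((invHom p) g).toMonoidHom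
    = (MulAut.conj (fC p g)).toMonoidHom.comp (fA p) := by
  intro g
  have hval : (Multiplicative.toAdd g).val = 0 ∨ (Multiplicative.toAdd g).val = 1 := by
    have := (Multiplicative.toAdd g).val_lt; omega
  have hfC : fC p g = tperm p ^ (Multiplicative.toAdd g).val := rfl
  have hinv : invHom p g = invAut p ^ (Multiplicative.toAdd g).val := rfl
  rcases hval with h | h <;> rw [h] at hfC hinv
  · rw [pow_zero] at hfC hinv
    rw [hfC, hinv]
    refine MonoidHom.ext fun a => Equiv.ext fun x => ?_
    simp
  · rw [pow_one] at hfC hinv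
    rw [hfC, hinv]
    refine MonoidHom.ext fun a => Equiv.ext fun x => ?_
    show fA p (a⁻¹) x = (tperm p * fA p a * (tperm p)⁻¹) x
    rw [tperm_inv]
    show emb p a⁻¹ * x = tperm p (fA p a (tperm p x))
    rw [fA_apply, t_mul, map_inv]
    congr 1
    exact (tfun_invol p x).symm

def psi : GenDihedral p →* Equiv.Perm (K p) :=
  SemidirectProduct.lift (fA p) (fC p) (compat p)

lemma psi_apply (g : GenDihedral p) : psi p g = fA p g.left * fC p g.right := rfl

lemma c_cases (c : Multiplicative (ZMod 2)) : c = 1 ∨ c = Multiplicative.ofAdd 1 := by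
  have : ∀ x : ZMod 2, x = 0 ∨ x = 1 := by decide
  rcases this (Multiplicative.toAdd c) with h | h <;> [left; right] <;>
    · apply_fun Multiplicative.toAdd
      simpa using h

lemma fC_gen : fC p (Multiplicative.ofAdd 1) = tperm p := by
  show tperm p ^ (Multiplicative.toAdd (Multiplicative.ofAdd (1 : ZMod 2))).val = _
  rw [toAdd_ofAdd, ZMod.val_one, pow_one]

lemma mem_psi_range_iff (h : Equiv.Perm (K p)) :
    h ∈ (psi p).range ↔ (∃ a, h = fA p a) ∨ (∃ a, h = fA p a * tperm p) := by
  constructor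
  · rintro ⟨g, rfl⟩
    rcases c_cases g.right with hc | hc <;> rw [psi_apply, hc]
    · left; exact ⟨g.left, by rw [map_one, mul_one]⟩
    · right; exact ⟨g.left, by rw [fC_gen]⟩
  · rintro (⟨a, rfl⟩ | ⟨a, rfl⟩)
    · exact ⟨⟨a, 1⟩, by rw [psi_apply, map_one, mul_one]⟩
    · exact ⟨⟨a, Multiplicative.ofAdd 1⟩, by rw [psi_apply, fC_gen]⟩

lemma emb_injective : Function.Injective (emb p) := by
  intro a b hab
  rw [emb_apply, emb_apply, Prod.ext_iff] at hab
  obtain ⟨h1, h2⟩ := hab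
  apply_fun Multiplicative.toAdd
  exact Prod.ext (by simpa using h1) (by simpa using h2)

lemma psi_injective : Function.Injective (psi p) := by
  rw [injective_iff_map_eq_one]
  intro g hg
  rcases c_cases g.right with hc | hc
  · rw [psi_apply, hc, map_one, mul_one] at hg
    have h1 : emb p g.left = 1 := by
      have := congrArg (fun f : Equiv.Perm (K p) => f 1) hg
      simpa [fA_apply] using this
    have : g.left = 1 := emb_injective p h1
    ext <;> simp [this, hc]
  · rw [psi_apply, hc, fC_gen] at hg
    exfalso
    have := congrArg (fun f : Equiv.Perm (K p) => f 1) hg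
    have h1 : (1 : K p) = ((1 : Multiplicative (ZMod p)), r (0 : ZMod p)) := rfl
    simp only [Equiv.Perm.mul_apply, Equiv.Perm.one_apply] at this
    rw [h1] at this
    simp [fA_apply, tperm_apply, tfun, emb_apply, Prod.ext_iff, ← DihedralGroup.r_zero] at this

lemma psi_apply' (g : GenDihedral p) (x : K p) :
    psi p g x = emb p g.left * (fC p g.right) x := rfl

lemma tperm_one : tperm p 1 = ((1 : Multiplicative (ZMod p)), sr (0 : ZMod p)) := by
  show tfun p 1 = _
  simp [tfun]

lemma psi_one_surj (y : K p) : ∃ g, psi p g 1 = y := by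
  obtain ⟨z, (k | k)⟩ := y
  · refine ⟨⟨Multiplicative.ofAdd (Multiplicative.toAdd z, k), 1⟩, ?_⟩
    show emb p (Multiplicative.ofAdd (Multiplicative.toAdd z, k)) * (fC p 1) 1 = _
    have hfc : fC p 1 = (1 : Equiv.Perm (K p)) := map_one _
    rw [hfc]
    simp [emb_apply]
  · refine ⟨⟨Multiplicative.ofAdd (Multiplicative.toAdd z, -k), Multiplicative.ofAdd 1⟩, ?_⟩
    show emb p (Multiplicative.ofAdd (Multiplicative.toAdd z, -k))
      * (fC p (Multiplicative.ofAdd 1)) 1 = _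
    rw [fC_gen, tperm_one, emb_apply]
    show Prod.mk _ _ = _
    rw [Prod.mk.injEq]
    refine ⟨by simp, ?_⟩
    show DihedralGroup.r (-k) * sr 0 = sr k
    rw [DihedralGroup.r_mul_sr]
    norm_num

lemma psi_fixed_free (g : GenDihedral p) (x : K p) (hx : psi p g x = x) : g = 1 := by
  rcases c_cases g.right with hc | hc
  · have hg : psi p g x = emb p g.left * x := by
      rw [psi_apply, hc, map_one, mul_one]; rfl
    rw [hg] at hx
    have : g.left = 1 := emb_injective p (mul_right_cancel (b := x) (by rw [map_one, one_mul]; exact hx))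
    ext <;> simp [this, hc]
  · exfalso
    have hg : psi p g x = emb p g.left * tperm p x := by
      rw [psi_apply, hc, fC_gen]; rfl
    rw [hg] at hx
    obtain ⟨z, (k | k)⟩ := x <;>
      simpa [tperm_apply, tfun, emb_apply, Prod.ext_iff] using congrArg Prod.snd hx

lemma psi_range_regular :
    (∀ x y : K p, ∃ s ∈ (psi p).range, s x = y) ∧
      ∀ s ∈ (psi p).range, ∀ x : K p, s x = x → s = 1 := by
  constructor
  · intro x y
    obtain ⟨g1, hg1⟩ := psi_one_surj p x
    obtain ⟨g2, hg2⟩ := psi_one_surj p y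
    refine ⟨psi p g2 * (psi p g1)⁻¹, ⟨g2 * g1⁻¹, by rw [map_mul, map_inv]⟩, ?_⟩
    rw [← hg1, Equiv.Perm.mul_apply, Equiv.Perm.inv_def, Equiv.symm_apply_apply, hg2]
  · rintro s ⟨g, rfl⟩ x hx
    rw [psi_fixed_free p g x hx, map_one]

lemma r_pow (j : ZMod p) (m : ℕ) : (DihedralGroup.r j : DihedralGroup p) ^ m
    = DihedralGroup.r (m • j) := by
  induction m with
  | zero => simp [← DihedralGroup.r_zero]
  | succ n ih =>
      rw [pow_succ, ih, DihedralGroup.r_mul_r, succ_nsmul]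

lemma rtype_pow_p (x : K p) (hx : ∃ k, x.2 = DihedralGroup.r k) : x ^ p = 1 := by
  obtain ⟨z, d⟩ := x
  obtain ⟨k, hk⟩ := hx
  simp only at hk
  subst hk
  have h1 : (z, (DihedralGroup.r k : DihedralGroup p)) ^ p = (z ^ p, DihedralGroup.r k ^ p) :=
    Prod.pow_mk ..
  rw [h1, r_pow]
  have hz : z ^ p = 1 := by
    apply_fun Multiplicative.toAdd
    rw [toAdd_pow]
    show p • Multiplicative.toAdd z = Multiplicative.toAdd 1
    rw [nsmul_eq_mul, ZMod.natCast_self, zero_mul]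
    rfl
  have hk : (p • k : ZMod p) = 0 := by
    rw [nsmul_eq_mul, ZMod.natCast_self, zero_mul]
  rw [hz, hk]
  rfl

lemma pow_p_eq_one_iff (hodd : Odd p) (x : K p) :
    x ^ p = 1 ↔ ∃ a, emb p a = x := by
  constructor
  · intro hx
    obtain ⟨z, (k | k)⟩ := x
    · exact ⟨Multiplicative.ofAdd (Multiplicative.toAdd z, k), by simp [emb_apply]⟩
    · exfalso
      have h1 : ((z, (DihedralGroup.sr k : DihedralGroup p)) : K p) ^ p
          = (z ^ p, DihedralGroup.sr k ^ p) := Prod.pow_mk ..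
      have h2 : (DihedralGroup.sr k : DihedralGroup p) ^ p = DihedralGroup.sr k := by
        obtain ⟨m, hm⟩ := hodd
        have hsq : (DihedralGroup.sr k : DihedralGroup p) ^ 2 = 1 := by
          rw [sq, DihedralGroup.sr_mul_sr, sub_self, ← DihedralGroup.one_def]
        have h3 : (DihedralGroup.sr k : DihedralGroup p) ^ (2 * m + 1) = DihedralGroup.sr k := by
          rw [pow_add, pow_mul, hsq, one_pow, one_mul, pow_one]
        rw [← hm] at h3
        exact h3
      rw [h1, h2] at hx
      have := congrArg Prod.snd hx
      simp [← DihedralGroup.r_zero] at this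
  · rintro ⟨a, rfl⟩
    exact rtype_pow_p p _ ⟨_, rfl⟩

def tau : K p → K p := fun k => (k.1⁻¹, DihedralGroup.sr 0 * k.2 * DihedralGroup.sr 0)

lemma tfun_mul (k x : K p) : tfun p (k * x) = tau p k * tfun p x := by
  obtain ⟨z1, d1⟩ := k
  obtain ⟨z2, d2⟩ := x
  show Prod.mk _ _ = Prod.mk _ _
  rw [Prod.mk.injEq]
  constructor
  · exact mul_inv z1 z2
  · show DihedralGroup.sr 0 * (d1 * d2) = DihedralGroup.sr 0 * d1 * DihedralGroup.sr 0
      * (DihedralGroup.sr 0 * d2)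
    have h1 : (DihedralGroup.sr 0 : DihedralGroup p) * DihedralGroup.sr 0 = 1 := by
      rw [DihedralGroup.sr_mul_sr, sub_self, ← DihedralGroup.one_def]
    rw [mul_assoc (DihedralGroup.sr 0 * d1) (DihedralGroup.sr 0),
      ← mul_assoc (DihedralGroup.sr 0) (DihedralGroup.sr 0) d2, h1, one_mul, mul_assoc]

lemma conj_lam (h : Equiv.Perm (K p)) (c : K p → K p) (hc : ∀ k x, h (k * x) = c k * h x)
    (k : K p) : h * lam p k * h⁻¹ = lam p (c k) := by
  refine Equiv.ext fun x => ?_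
  show h (lam p k (h⁻¹ x)) = _
  rw [lam_apply, hc, Equiv.Perm.inv_def, Equiv.apply_symm_apply]
  rfl

lemma mem_norm_lam (h : Equiv.Perm (K p)) (c c' : K p → K p)
    (hc : ∀ k x, h (k * x) = c k * h x) (hc' : ∀ k x, h⁻¹ (k * x) = c' k * h⁻¹ x) :
    h ∈ Subgroup.normalizer ((lam p).range : Set (Equiv.Perm (K p))) := by
  rw [Subgroup.mem_normalizer_iff]
  rintro b
  constructor
  · rintro ⟨k, rfl⟩
    exact ⟨c k, (conj_lam p h c hc k).symm⟩
  · rintro ⟨k, hk⟩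
    refine ⟨c' k, ?_⟩
    have h2 := conj_lam p h⁻¹ c' hc' k
    rw [inv_inv] at h2
    rw [← h2, hk]
    group

lemma hgen_mul (a : Multiplicative (ZMod p × ZMod p)) (k x : K p) :
    (fA p a * tperm p) (k * x) = (emb p a * tau p k * (emb p a)⁻¹) * ((fA p a * tperm p) x) := by
  show emb p a * tfun p (k * x) = _ * (emb p a * tfun p x)
  rw [tfun_mul]
  group

lemma hgen_sq (a : Multiplicative (ZMod p × ZMod p)) :
    (fA p a * tperm p) * (fA p a * tperm p) = 1 := by
  have hconj : tperm p * fA p a * (tperm p)⁻¹ = fA p a⁻¹ := by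
    have := congrFun (congrArg DFunLike.coe (compat p (Multiplicative.ofAdd 1))) a
    simp only [MonoidHom.coe_comp, Function.comp_apply, MulEquiv.coe_toMonoidHom,
      MulAut.conj_apply] at this
    rw [fC_gen] at this
    have hi : (invHom p) (Multiplicative.ofAdd 1) a = a⁻¹ := by
      show (invAut p ^ (Multiplicative.toAdd (Multiplicative.ofAdd (1 : ZMod 2))).val) a = a⁻¹
      rw [toAdd_ofAdd, ZMod.val_one, pow_one]
      rfl
    rw [hi] at this
    rw [← this]
  calc fA p a * tperm p * (fA p a * tperm p)
      = fA p a * (tperm p * fA p a * (tperm p)⁻¹) * (tperm p * tperm p) := by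
        rw [tperm_inv, tperm_sq, mul_one]; group
    _ = fA p a * fA p a⁻¹ * 1 := by rw [hconj, tperm_sq]
    _ = 1 := by rw [← map_mul, mul_inv_cancel, map_one, mul_one]

lemma hgen_inv (a : Multiplicative (ZMod p × ZMod p)) :
    (fA p a * tperm p)⁻¹ = fA p a * tperm p :=
  inv_eq_of_mul_eq_one_left (hgen_sq p a)

lemma hgen_mem_norm (a : Multiplicative (ZMod p × ZMod p)) :
    fA p a * tperm p ∈ Subgroup.normalizer ((lam p).range : Set (Equiv.Perm (K p))) := by
  refine mem_norm_lam p _ (fun k => emb p a * tau p k * (emb p a)⁻¹)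
    (fun k => emb p a * tau p k * (emb p a)⁻¹) (hgen_mul p a) ?_
  rw [hgen_inv]
  exact hgen_mul p a

lemma hgen_fixed_free (a : Multiplicative (ZMod p × ZMod p)) (x : K p) :
    (fA p a * tperm p) x ≠ x := by
  intro hx
  have : (fA p a * tperm p) x = emb p a * tperm p x := rfl
  rw [this] at hx
  obtain ⟨z, (k | k)⟩ := x <;>
    simpa [tperm_apply, tfun, emb_apply, Prod.ext_iff] using congrArg Prod.snd hx

lemma tau_emb (b : Multiplicative (ZMod p × ZMod p)) : tau p (emb p b) = (emb p b)⁻¹ := by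
  show Prod.mk _ _ = _
  rw [emb_apply]
  show Prod.mk _ _ = Prod.mk _ _
  rw [Prod.mk.injEq]
  refine ⟨rfl, ?_⟩
  show DihedralGroup.sr 0 * DihedralGroup.r (Multiplicative.toAdd b).2 * DihedralGroup.sr 0 = _
  rw [DihedralGroup.sr_mul_r, DihedralGroup.sr_mul_sr, r_inv]
  norm_num

lemma hgen_conj_inverts (a b : Multiplicative (ZMod p × ZMod p)) :
    (fA p a * tperm p) * lam p (emb p b) * (fA p a * tperm p)⁻¹ = (lam p (emb p b))⁻¹ := by
  rw [conj_lam p _ _ (hgen_mul p a), tau_emb]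
  have hcomm : emb p a * (emb p b)⁻¹ = (emb p b)⁻¹ * emb p a := by
    rw [← map_inv, ← map_mul, mul_comm, map_mul, map_inv]
  have h2 : emb p a * (emb p b)⁻¹ * (emb p a)⁻¹ = (emb p b)⁻¹ := by
    rw [hcomm, mul_assoc, mul_inv_cancel, mul_one]
  rw [h2, map_inv]

def sK : K p := ((1 : Multiplicative (ZMod p)), DihedralGroup.sr 0)

lemma sK_sq : sK p * sK p = 1 := by
  show ((1 : Multiplicative (ZMod p)), DihedralGroup.sr 0)
    * ((1 : Multiplicative (ZMod p)), DihedralGroup.sr 0) = 1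
  rw [Prod.mk_mul_mk, DihedralGroup.sr_mul_sr, mul_one, sub_self, ← DihedralGroup.one_def]
  rfl

lemma sK_inv : (sK p)⁻¹ = sK p := inv_eq_of_mul_eq_one_left (sK_sq p)

lemma char_lemma (hp : p.Prime) (hodd : Odd p) (H : Equiv.Perm (K p))
    (hnorm : H ∈ Subgroup.normalizer ((lam p).range : Set (Equiv.Perm (K p))))
    (hsq : H * H = 1)
    (hfp : ∀ x, H x ≠ x)
    (hinv : ∀ k : K p, k ^ p = 1 → H * lam p k * H⁻¹ = (lam p k)⁻¹) :
    ∃ a, H = fA p a * tperm p := by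
  haveI : Fact p.Prime := ⟨hp⟩
  have h2ne : (2 : ZMod p) ≠ 0 := by
    intro h2
    have hdvd : p ∣ 2 := by
      have : ((2 : ℕ) : ZMod p) = 0 := by exact_mod_cast h2
      exact (ZMod.natCast_eq_zero_iff 2 p).mp this
    have hp2 : p = 2 := (Nat.prime_dvd_prime_iff_eq hp Nat.prime_two).mp hdvd
    obtain ⟨m, hm⟩ := hodd
    omega
  have hhalf : ∀ c : ZMod p, (2 : ZMod p)⁻¹ * c + (2 : ZMod p)⁻¹ * c = c := fun c => by
    rw [← two_mul, ← mul_assoc, mul_inv_cancel₀ h2ne, one_mul]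
  have stepA : ∀ k : K p, k ^ p = 1 → ∀ x, H (k * x) = k⁻¹ * H x := by
    intro k hk x
    have h1 := hinv k hk
    have h2 : H * lam p k = (lam p k)⁻¹ * H := by rw [← h1]; group
    have h3 : (lam p k)⁻¹ = lam p k⁻¹ := (map_inv (lam p) k).symm
    rw [h3] at h2
    have h4 := Equiv.ext_iff.mp h2 x
    exact h4
  have hsqpt : ∀ x, H (H x) = x := by
    intro x
    have := Equiv.ext_iff.mp hsq x
    simpa [Equiv.Perm.mul_apply] using this
  rcases e1 : H 1 with ⟨z0, (k0 | k0)⟩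
  · -- H 1 is a rotation: contradiction
    exfalso
    set b : K p := (Multiplicative.ofAdd ((2 : ZMod p)⁻¹ * Multiplicative.toAdd z0),
      DihedralGroup.r ((2 : ZMod p)⁻¹ * k0)) with hb
    have hbp : b ^ p = 1 := rtype_pow_p p b ⟨_, rfl⟩
    have hbb : b * b = (z0, DihedralGroup.r k0) := by
      show Prod.mk _ _ = _
      rw [Prod.mk.injEq]
      constructor
      · show Multiplicative.ofAdd _ * Multiplicative.ofAdd _ = z0
        rw [← ofAdd_add, hhalf, ofAdd_toAdd]
      · rw [DihedralGroup.r_mul_r, hhalf]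
    have h5 := stepA b hbp 1
    rw [mul_one, e1, ← hbb, ← mul_assoc, inv_mul_cancel, one_mul] at h5
    exact hfp b h5
  · -- H 1 = (z0, sr k0)
    have hsmem : lam p (sK p) ∈ (lam p).range := ⟨_, rfl⟩
    obtain ⟨u, hu⟩ := (Subgroup.mem_normalizer_iff.mp hnorm _).mp hsmem
    have hHs : ∀ x, H (sK p * x) = u * H x := by
      intro x
      have h2 : H * lam p (sK p) = lam p u * H := by rw [hu]; group
      have := Equiv.ext_iff.mp h2 x
      simpa [Equiv.Perm.mul_apply, lam_apply] using this
    have hu2 : u * u = 1 := by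
      apply lam_injective p
      rw [map_mul, hu, map_one]
      have heq : (H * lam p (sK p) * H⁻¹) * (H * lam p (sK p) * H⁻¹)
          = H * (lam p (sK p) * lam p (sK p)) * H⁻¹ := by group
      rw [heq, ← map_mul, sK_sq, map_one, mul_one, mul_inv_cancel]
    -- key claim: H (sK p) = (z0, sr k0) * sK p
    have hkey : H (sK p) = ((z0, DihedralGroup.sr k0) : K p) * sK p := by
      rcases u with ⟨zu, (ku | ku)⟩
      · -- u is a rotation, hence u = 1, contradiction via fixed point
        exfalso
        have hzu : zu = 1 := by
          have h6 : zu * zu = 1 := congrArg Prod.fst hu2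
          have h7 : Multiplicative.toAdd zu + Multiplicative.toAdd zu = 0 := by
            apply_fun Multiplicative.toAdd at h6
            simpa using h6
          have h8 : (2 : ZMod p) * Multiplicative.toAdd zu = 0 := by
            rw [two_mul]; exact h7
          have h9 : Multiplicative.toAdd zu = 0 :=
            (mul_eq_zero.mp h8).resolve_left h2ne
          apply_fun Multiplicative.toAdd
          simpa using h9
        have hku : ku + ku = 0 := by
          have h6 : DihedralGroup.r ku * DihedralGroup.r ku = DihedralGroup.r 0 := by
            have := congrArg Prod.snd hu2
            simpa [← DihedralGroup.r_zero] using this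
          rw [DihedralGroup.r_mul_r] at h6
          exact DihedralGroup.r.injEq .. ▸ h6
        have hku0 : ku = 0 := by
          have h8 : (2 : ZMod p) * ku = 0 := by rw [two_mul]; exact hku
          exact (mul_eq_zero.mp h8).resolve_left h2ne
        have hu1 : ((zu, DihedralGroup.r ku) : K p) = 1 := by rw [hzu, hku0]; rfl
        -- now H (sK) = n, find fixed point on the reflection coset
        have hHsval : H (sK p) = (z0, DihedralGroup.sr k0) := by
          have := hHs 1
          rw [mul_one, hu1, one_mul, e1] at this
          exact this
        set b : K p := (Multiplicative.ofAdd ((2 : ZMod p)⁻¹ * Multiplicative.toAdd z0),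
          DihedralGroup.r (-((2 : ZMod p)⁻¹ * k0))) with hb
        have hbp : b ^ p = 1 := rtype_pow_p p b ⟨_, rfl⟩
        have h5 := stepA b hbp (sK p)
        rw [hHsval] at h5
        have hfix : b⁻¹ * ((z0, DihedralGroup.sr k0) : K p) = b * sK p := by
          show Prod.mk _ _ = Prod.mk _ _
          rw [Prod.mk.injEq]
          constructor
          · show (Multiplicative.ofAdd _)⁻¹ * z0 = Multiplicative.ofAdd _ * 1
            rw [mul_one, ← ofAdd_neg, ← ofAdd_toAdd z0, ← ofAdd_add]
            congr 1
            rw [toAdd_ofAdd]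
            linear_combination -hhalf (Multiplicative.toAdd z0)
          · show DihedralGroup.r _ * DihedralGroup.sr k0 = DihedralGroup.r _ * DihedralGroup.sr 0
            rw [DihedralGroup.r_mul_sr, DihedralGroup.r_mul_sr]
            congr 1
            linear_combination -hhalf k0
        rw [hfix] at h5
        exact hfp _ h5
      · -- u = (1, sr ku)
        have hzu : zu = 1 := by
          have h6 : zu * zu = 1 := congrArg Prod.fst hu2
          have h7 : Multiplicative.toAdd zu + Multiplicative.toAdd zu = 0 := by
            apply_fun Multiplicative.toAdd at h6
            simpa using h6
          have h8 : (2 : ZMod p) * Multiplicative.toAdd zu = 0 := by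
            rw [two_mul]; exact h7
          have h9 : Multiplicative.toAdd zu = 0 :=
            (mul_eq_zero.mp h8).resolve_left h2ne
          apply_fun Multiplicative.toAdd
          simpa using h9
        have hHsval : H (sK p) = (z0, DihedralGroup.r (k0 - ku)) := by
          have := hHs 1
          rw [mul_one, e1] at this
          rw [this, hzu]
          show Prod.mk _ _ = _
          rw [Prod.mk.injEq]
          exact ⟨one_mul z0, by rw [DihedralGroup.sr_mul_sr]⟩
        have hHsp : (H (sK p)) ^ p = 1 := by
          rw [hHsval]; exact rtype_pow_p p _ ⟨_, rfl⟩
        have h5 := stepA (H (sK p)) hHsp 1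
        rw [mul_one, hsqpt, e1] at h5
        -- h5 : sK p = (H (sK p))⁻¹ * (z0, sr k0)
        have h6 : H (sK p) * sK p = (z0, DihedralGroup.sr k0) := by
          nth_rewrite 2 [h5]
          rw [← mul_assoc, mul_inv_cancel, one_mul]
        rw [← h6, mul_assoc, sK_sq, mul_one]
    -- conclude
    refine ⟨Multiplicative.ofAdd (Multiplicative.toAdd z0, -k0), ?_⟩
    have hemb : emb p (Multiplicative.ofAdd (Multiplicative.toAdd z0, -k0))
        = ((z0, DihedralGroup.r (-k0)) : K p) := by
      rw [emb_apply]
      show Prod.mk _ _ = _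
      rw [Prod.mk.injEq]
      exact ⟨by simp, rfl⟩
    have hns : ((z0, DihedralGroup.sr k0) : K p) * sK p = (z0, DihedralGroup.r (-k0)) := by
      rw [show sK p = ((1 : Multiplicative (ZMod p)), DihedralGroup.sr 0) from rfl,
        Prod.mk_mul_mk, DihedralGroup.sr_mul_sr, mul_one, zero_sub]
    refine Equiv.ext fun x => ?_
    have hRHS : (fA p (Multiplicative.ofAdd (Multiplicative.toAdd z0, -k0)) * tperm p) x
        = ((z0, DihedralGroup.r (-k0)) : K p) * tfun p x := by
      show emb p _ * tfun p x = _
      rw [hemb]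
    rw [hRHS]
    rcases x with ⟨z, (k | k)⟩
    · -- rotation
      have hxp : ((z, DihedralGroup.r k) : K p) ^ p = 1 := rtype_pow_p p _ ⟨_, rfl⟩
      have h5 := stepA _ hxp 1
      rw [mul_one, e1] at h5
      rw [h5]
      show Prod.mk _ _ = Prod.mk _ _
      rw [Prod.mk.injEq]
      constructor
      · exact mul_comm _ _
      · show DihedralGroup.r (-k) * DihedralGroup.sr k0
          = DihedralGroup.r (-k0) * (DihedralGroup.sr 0 * DihedralGroup.r k)
        rw [DihedralGroup.r_mul_sr, DihedralGroup.sr_mul_r, DihedralGroup.r_mul_sr]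
        congr 1
        ring
    · -- reflection
      have hbp : ((z, DihedralGroup.r (-k)) : K p) ^ p = 1 := rtype_pow_p p _ ⟨_, rfl⟩
      have hbs : ((z, DihedralGroup.r (-k)) : K p) * sK p = ((z, DihedralGroup.sr k) : K p) := by
        rw [show sK p = ((1 : Multiplicative (ZMod p)), DihedralGroup.sr 0) from rfl,
          Prod.mk_mul_mk, DihedralGroup.r_mul_sr, mul_one]
        congr 2
        ring
      have hbinv : ((z, DihedralGroup.r (-k)) : K p)⁻¹ = ((z⁻¹, DihedralGroup.r k) : K p) := by
        rw [Prod.inv_mk, r_inv, neg_neg]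
      have h5 := stepA _ hbp (sK p)
      rw [hbs, hkey, hns, hbinv, Prod.mk_mul_mk, DihedralGroup.r_mul_r] at h5
      rw [h5]
      show Prod.mk _ _ = (((z0, DihedralGroup.r (-k0)) : K p)
        * ((z⁻¹, DihedralGroup.sr 0 * DihedralGroup.sr k) : K p))
      rw [DihedralGroup.sr_mul_sr, Prod.mk_mul_mk, DihedralGroup.r_mul_r, Prod.mk.injEq]
      constructor
      · exact mul_comm _ _
      · congr 1
        ring

lemma psi_range_norm (hp : p.Prime) (hodd : Odd p) :
    Subgroup.normalizer ((lam p).range : Set (Equiv.Perm (K p))) ≤ Subgroup.normalizer ((psi p).range : Set (Equiv.Perm (K p))) := by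
  have key : ∀ f ∈ Subgroup.normalizer ((lam p).range : Set (Equiv.Perm (K p))), ∀ h ∈ (psi p).range,
      f * h * f⁻¹ ∈ (psi p).range := by
    intro f hf h hh
    have hcp : ∀ (g : Equiv.Perm (K p)) (x : Equiv.Perm (K p)) (n : ℕ),
        (g * x * g⁻¹) ^ n = g * x ^ n * g⁻¹ := by
      intro g x n
      have := map_pow (MulAut.conj g) x n
      simpa [MulAut.conj_apply] using this
    rw [mem_psi_range_iff] at hh ⊢
    have hfinv : f⁻¹ ∈ Subgroup.normalizer ((lam p).range : Set (Equiv.Perm (K p))) := inv_mem hf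
    rcases hh with ⟨a, rfl⟩ | ⟨a, rfl⟩
    · -- translation case
      obtain ⟨k, hk⟩ := (Subgroup.mem_normalizer_iff.mp hf (lam p (emb p a))).mp ⟨_, rfl⟩
      have hkp : k ^ p = 1 := by
        apply lam_injective p
        rw [map_pow, map_one, hk, hcp, ← map_pow, rtype_pow_p p (emb p a) ⟨_, rfl⟩, map_one,
          mul_one, mul_inv_cancel]
      obtain ⟨a', ha'⟩ := (pow_p_eq_one_iff p hodd k).mp hkp
      left
      refine ⟨a', ?_⟩
      show f * lam p (emb p a) * f⁻¹ = lam p (emb p a')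
      rw [← hk, ha']
    · -- reflection case
      have hnormH : f * (fA p a * tperm p) * f⁻¹ ∈ Subgroup.normalizer ((lam p).range : Set (Equiv.Perm (K p))) :=
        mul_mem (mul_mem hf (hgen_mem_norm p a)) hfinv
      have hsqH : (f * (fA p a * tperm p) * f⁻¹) * (f * (fA p a * tperm p) * f⁻¹) = 1 := by
        have heq : (f * (fA p a * tperm p) * f⁻¹) * (f * (fA p a * tperm p) * f⁻¹)
            = f * ((fA p a * tperm p) * (fA p a * tperm p)) * f⁻¹ := by group
        rw [heq, hgen_sq, mul_one, mul_inv_cancel]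
      have hfpH : ∀ x, (f * (fA p a * tperm p) * f⁻¹) x ≠ x := by
        intro x hx
        refine hgen_fixed_free p a (f⁻¹ x) ?_
        have hx' : f ((fA p a * tperm p) (f⁻¹ x)) = x := hx
        exact f.injective (by rw [hx', Equiv.Perm.inv_def, Equiv.apply_symm_apply])
      have hinvH : ∀ k : K p, k ^ p = 1 →
          (f * (fA p a * tperm p) * f⁻¹) * lam p k * (f * (fA p a * tperm p) * f⁻¹)⁻¹
            = (lam p k)⁻¹ := by
        intro k hkp
        obtain ⟨k', hk'⟩ := (Subgroup.mem_normalizer_iff.mp hfinv (lam p k)).mp ⟨k, rfl⟩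
        rw [inv_inv] at hk'
        have hk'p : k' ^ p = 1 := by
          apply lam_injective p
          rw [map_pow, map_one, hk']
          have heq : (f⁻¹ * lam p k * f) ^ p = f⁻¹ * (lam p k) ^ p * f := by
            have := hcp f⁻¹ (lam p k) p
            rwa [inv_inv] at this
          rw [heq, ← map_pow, hkp, map_one, mul_one, inv_mul_cancel]
        obtain ⟨b, hb⟩ := (pow_p_eq_one_iff p hodd k').mp hk'p
        have hg := hgen_conj_inverts p a b
        rw [hb] at hg
        have heq2 : (f * (fA p a * tperm p) * f⁻¹) * lam p k * (f * (fA p a * tperm p) * f⁻¹)⁻¹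
            = f * ((fA p a * tperm p) * lam p k' * (fA p a * tperm p)⁻¹) * f⁻¹ := by
          rw [hk']; group
        rw [heq2, hg, hk']
        group
      obtain ⟨a', ha'⟩ := char_lemma p hp hodd _ hnormH hsqH hfpH hinvH
      right
      exact ⟨a', ha'⟩
  intro f hf
  rw [Subgroup.mem_normalizer_iff]
  intro b
  constructor
  · intro hb; exact key f hf b hb
  · intro hb
    have h2 := key f⁻¹ (inv_mem hf) _ hb
    have heq : f⁻¹ * (f * b * f⁻¹) * f⁻¹⁻¹ = b := by group
    rwa [heq] at h2

def permMulEquiv {X Y : Type*} (e : X ≃ Y) : Equiv.Perm X ≃* Equiv.Perm Y where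
  toEquiv := e.permCongr
  map_mul' f g := Equiv.ext fun y => by
    simp [Equiv.permCongr_apply, Equiv.Perm.mul_apply]

lemma permMulEquiv_apply {X Y : Type*} (e : X ≃ Y) (σ : Equiv.Perm X) (y : Y) :
    permMulEquiv e σ y = e (σ (e.symm y)) := rfl

lemma normalizer_map_equiv_mem {A B : Type*} [Group A] [Group B] (Φ : A ≃* B) (S : Subgroup A)
    {f : B} (hf : Φ.symm f ∈ Subgroup.normalizer (S : Set A)) : f ∈ Subgroup.normalizer ((S.map Φ.toMonoidHom : Subgroup B) : Set B) := by
  rw [Subgroup.mem_normalizer_iff] at hf ⊢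
  intro m
  rw [Subgroup.mem_map_equiv, Subgroup.mem_map_equiv,
    show Φ.symm (f * m * f⁻¹) = Φ.symm f * Φ.symm m * (Φ.symm f)⁻¹ by
      rw [map_mul, map_mul, map_inv]]
  exact hf (Φ.symm m)

lemma symm_mem_normalizer {A B : Type*} [Group A] [Group B] (Φ : A ≃* B) (S : Subgroup A)
    {f : B} (hf : f ∈ Subgroup.normalizer ((S.map Φ.toMonoidHom : Subgroup B) : Set B)) : Φ.symm f ∈ Subgroup.normalizer (S : Set A) := by
  rw [Subgroup.mem_normalizer_iff] at hf ⊢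
  intro a
  have h1 : a ∈ S ↔ Φ a ∈ S.map Φ.toMonoidHom := by rw [Subgroup.mem_map_equiv]; simp
  rw [h1, hf (Φ a), Subgroup.mem_map_equiv,
    show Φ.symm (f * Φ a * f⁻¹) = Φ.symm f * a * (Φ.symm f)⁻¹ by
      rw [map_mul, map_mul, map_inv, MulEquiv.symm_apply_apply]]

theorem transport {X : Type*} (hp : p.Prime) (hodd : Odd p) (x₀ : X)
    (N : Subgroup (Equiv.Perm X))
    (hreg : (∀ x y : X, ∃ s ∈ N, s x = y) ∧ ∀ s ∈ N, ∀ x : X, s x = x → s = 1)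
    (e : ↥N ≃* K p) :
    ∃ M : Subgroup (Equiv.Perm X),
      ((∀ x y : X, ∃ s ∈ M, s x = y) ∧ ∀ s ∈ M, ∀ x : X, s x = x → s = 1) ∧
      Nonempty (↥M ≃* GenDihedral p) ∧ Subgroup.normalizer (N : Set (Equiv.Perm X)) ≤ Subgroup.normalizer (M : Set (Equiv.Perm X)) := by
  obtain ⟨htrans, hfree⟩ := hreg
  have hinj : Function.Injective (fun k : K p => ((e.symm k : Equiv.Perm X)) x₀) := by
    intro k k' hkk
    simp only at hkk
    have h2 : (((e.symm k')⁻¹ * e.symm k : ↥N) : Equiv.Perm X) x₀ = x₀ := by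
      rw [Subgroup.coe_mul, Subgroup.coe_inv]
      show ((e.symm k' : Equiv.Perm X))⁻¹ ((e.symm k : Equiv.Perm X) x₀) = x₀
      rw [hkk]
      exact Equiv.symm_apply_apply _ _
    have h3 := hfree _ (SetLike.coe_mem _) x₀ h2
    have h4 : (e.symm k')⁻¹ * e.symm k = 1 := Subtype.ext h3
    have h5 : e.symm k' = e.symm k := inv_mul_eq_one.mp h4
    exact e.symm.injective h5.symm
  have hsurj : Function.Surjective (fun k : K p => ((e.symm k : Equiv.Perm X)) x₀) := by
    intro x
    obtain ⟨s, hs, hsx⟩ := htrans x₀ x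
    refine ⟨e ⟨s, hs⟩, ?_⟩
    simp only [MulEquiv.symm_apply_apply]
    exact hsx
  set b : K p ≃ X := Equiv.ofBijective _ ⟨hinj, hsurj⟩ with hbdef
  set Φ : Equiv.Perm (K p) ≃* Equiv.Perm X := permMulEquiv b with hΦdef
  have hb : ∀ k, b k = ((e.symm k : Equiv.Perm X)) x₀ := fun _ => rfl
  have hΦapp : ∀ (σ : Equiv.Perm (K p)) (x : X), Φ σ x = b (σ (b.symm x)) :=
    fun σ x => rfl
  have hΦlam : ∀ k, Φ (lam p k) = ((e.symm k : ↥N) : Equiv.Perm X) := by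
    intro k
    refine Equiv.ext fun x => ?_
    rw [hΦapp]
    have h1 : b ((lam p k) (b.symm x)) = ((e.symm k : Equiv.Perm X)) (b (b.symm x)) := by
      rw [lam_apply, hb, hb, map_mul, Subgroup.coe_mul]
      rfl
    rw [h1, Equiv.apply_symm_apply]
  have hmapN : (lam p).range.map Φ.toMonoidHom = N := by
    apply le_antisymm
    · rintro _ ⟨_, ⟨k, rfl⟩, rfl⟩
      show Φ (lam p k) ∈ N
      rw [hΦlam]
      exact (e.symm k).2
    · intro ν hν
      refine ⟨lam p (e ⟨ν, hν⟩), ⟨_, rfl⟩, ?_⟩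
      show Φ (lam p (e ⟨ν, hν⟩)) = ν
      rw [hΦlam, MulEquiv.symm_apply_apply]
  refine ⟨(psi p).range.map Φ.toMonoidHom, ⟨?_, ?_⟩, ⟨?_⟩, ?_⟩
  · intro x y
    obtain ⟨s, hs, hsx⟩ := (psi_range_regular p).1 (b.symm x) (b.symm y)
    refine ⟨Φ s, ⟨s, hs, rfl⟩, ?_⟩
    rw [hΦapp, hsx, Equiv.apply_symm_apply]
  · rintro _ ⟨s, hs, rfl⟩ x hx
    show Φ s = 1
    have hx' : Φ s x = x := hx
    have h2 : s (b.symm x) = b.symm x := by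
      apply b.injective
      rw [← hΦapp s x, hx', Equiv.apply_symm_apply]
    rw [(psi_range_regular p).2 s hs (b.symm x) h2, map_one]
  · exact ((MulEquiv.subgroupMap Φ (psi p).range).symm.trans
      (MonoidHom.ofInjective (psi_injective p)).symm)
  · intro f hf
    rw [← hmapN] at hf
    exact normalizer_map_equiv_mem Φ _ (psi_range_norm p hp hodd (symm_mem_normalizer Φ _ hf))

end GenDihAux2

/-- Theorem 4.1, second case: if a separable extension of degree `2 p ^ 2` (Galois data
`(G, G')`, `p` an odd prime) has a Hopf Galois structure of type `C_p × D_{2p}`, then it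
has one of type `(C_p × C_p) ⋊ C_2`. -/
theorem dihedral_prod_type_implies_genDihedral_type (p : ℕ) (hp : p.Prime) (hodd : Odd p)
    (G : Type*) [Group G] [Finite G] (G' : Subgroup G)
    (hindex : G'.index = 2 * p ^ 2)
    (h : ∃ N : Subgroup (Equiv.Perm (G ⧸ G')),
        IsRegularSubgroup N ∧
        Nonempty (↥N ≃* Multiplicative (ZMod p) × DihedralGroup p) ∧
        ∀ g : G, MulAction.toPermHom G (G ⧸ G') g ∈ Subgroup.normalizer (N : Set (Equiv.Perm (G ⧸ G')))) :
    ∃ M : Subgroup (Equiv.Perm (G ⧸ G')),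
        IsRegularSubgroup M ∧
        Nonempty (↥M ≃* GenDihedral p) ∧
        ∀ g : G, MulAction.toPermHom G (G ⧸ G') g ∈ Subgroup.normalizer (M : Set (Equiv.Perm (G ⧸ G'))) := by
  obtain ⟨N, hreg, ⟨e⟩, hnorm⟩ := h
  obtain ⟨M, hregM, hiso, hle⟩ :=
    GenDihAux2.transport p hp hodd ((1 : G) : G ⧸ G') N hreg e
  exact ⟨M, hregM, hiso, fun g => hle (hnorm g)⟩
end
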